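/- arXiv:2512.10466 — 6 statements merged into one kernel-verified Lean document; each statement's English description precedes it below -/
import Mathlib

section
/- Let N₀ and N₁ be two Hermitian norms on a finite-dimensional complex vector space V, and let e₁,…,e_v be a basis of V orthogonal for both N₀ and N₁. Define the rooftop norm N₀∨N₁ as the Hermitian norm for which e₁,…,e_v is orthogonal and ‖e_i‖_{N₀∨N₁} = max(‖e_i‖_{N₀}, ‖e_i‖_{N₁}). Then (1/√2)·(N₀∨N₁) ≤ max(N₀, N₁) ≤ N₀∨N₁, where max(N₀,N₁) denotes the pointwise maximum of the two norms. -/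
open scoped BigOperators

/-- The Hermitian norm on `V` for which the basis `b` is orthogonal with `‖b j‖ = c j`. -/
noncomputable def hermNorm {V : Type*} [AddCommGroup V] [Module ℂ V] {v : ℕ}
    (b : Module.Basis (Fin v) ℂ V) (c : Fin v → ℝ) (w : V) : ℝ :=
  Real.sqrt (∑ j, (c j) ^ 2 * ‖b.repr w j‖ ^ 2)

/-- For two Hermitian norms `N₀`, `N₁` with a simultaneously orthogonal basis, and the
rooftop Hermitian norm `N₀ ∨ N₁`, one has
`(1/√2)·(N₀ ∨ N₁) ≤ max (N₀, N₁) ≤ N₀ ∨ N₁` pointwise. -/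
theorem rooftop_norm_compare {V : Type*} [AddCommGroup V] [Module ℂ V]
    (v : ℕ) (b : Module.Basis (Fin v) ℂ V) (c₀ c₁ : Fin v → ℝ)
    (h₀ : ∀ j, 0 < c₀ j) (h₁ : ∀ j, 0 < c₁ j) (w : V) :
    (1 / Real.sqrt 2) * hermNorm b (fun j => max (c₀ j) (c₁ j)) w ≤
        max (hermNorm b c₀ w) (hermNorm b c₁ w) ∧
      max (hermNorm b c₀ w) (hermNorm b c₁ w) ≤
        hermNorm b (fun j => max (c₀ j) (c₁ j)) w := by
  set a : Fin v → ℝ := fun j => ‖b.repr w j‖ ^ 2 with ha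
  have ha0 : ∀ j, 0 ≤ a j := fun j => sq_nonneg _
  set S₀ := ∑ j, (c₀ j) ^ 2 * a j with hS₀
  set S₁ := ∑ j, (c₁ j) ^ 2 * a j with hS₁
  set Sm := ∑ j, (max (c₀ j) (c₁ j)) ^ 2 * a j with hSm
  have hS₀0 : 0 ≤ S₀ := Finset.sum_nonneg fun j _ => mul_nonneg (sq_nonneg _) (ha0 j)
  have hS₁0 : 0 ≤ S₁ := Finset.sum_nonneg fun j _ => mul_nonneg (sq_nonneg _) (ha0 j)
  have key : Sm ≤ S₀ + S₁ := by
    rw [hSm, hS₀, hS₁, ← Finset.sum_add_distrib]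
    refine Finset.sum_le_sum fun j _ => ?_
    rw [← add_mul]
    refine mul_le_mul_of_nonneg_right ?_ (ha0 j)
    rcases le_total (c₀ j) (c₁ j) with h | h
    · rw [max_eq_right h]; nlinarith [sq_nonneg (c₀ j)]
    · rw [max_eq_left h]; nlinarith [sq_nonneg (c₁ j)]
  have hN0 : hermNorm b c₀ w = Real.sqrt S₀ := rfl
  have hN1 : hermNorm b c₁ w = Real.sqrt S₁ := rfl
  have hNm : hermNorm b (fun j => max (c₀ j) (c₁ j)) w = Real.sqrt Sm := rfl
  constructor
  · rw [hN0, hN1, hNm]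
    have h1 : Sm ≤ 2 * max S₀ S₁ := by
      rcases le_total S₀ S₁ with h | h
      · rw [max_eq_right h]; linarith
      · rw [max_eq_left h]; linarith
    have h2 : Real.sqrt Sm ≤ Real.sqrt 2 * Real.sqrt (max S₀ S₁) := by
      rw [← Real.sqrt_mul (by norm_num)]
      exact Real.sqrt_le_sqrt h1
    have h3 : Real.sqrt (max S₀ S₁) = max (Real.sqrt S₀) (Real.sqrt S₁) := by
      rcases le_total S₀ S₁ with h | h
      · rw [max_eq_right h, max_eq_right (Real.sqrt_le_sqrt h)]
      · rw [max_eq_left h, max_eq_left (Real.sqrt_le_sqrt h)]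
    have hs2 : (0:ℝ) < Real.sqrt 2 := Real.sqrt_pos.mpr (by norm_num)
    rw [div_mul_eq_mul_div, one_mul, div_le_iff₀ hs2, mul_comm, ← h3]
    exact h2
  · rw [hN0, hN1, hNm]
    have hmono : ∀ (c : Fin v → ℝ), (∀ j, c j ≤ max (c₀ j) (c₁ j)) → (∀ j, 0 ≤ c j) →
        Real.sqrt (∑ j, (c j) ^ 2 * a j) ≤ Real.sqrt Sm := by
      intro c hc hc0
      apply Real.sqrt_le_sqrt
      refine Finset.sum_le_sum fun j _ => ?_
      exact mul_le_mul_of_nonneg_right (pow_le_pow_left₀ (hc0 j) (hc j) 2) (ha0 j)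
    exact max_le (hmono c₀ (fun j => le_max_left _ _) (fun j => (h₀ j).le))
      (hmono c₁ (fun j => le_max_right _ _) (fun j => (h₁ j).le))
end

section
/- Let N₀, N₁, N₂ be norms on a finite-dimensional complex vector space V of dimension v, and suppose there is C > 0 with e^{-C}·N₁ ≤ N₂ ≤ e^{C}·N₁ pointwise. Then for every p ∈ [1,∞), |d_p(N₀,N₁) − d_p(N₀,N₂)| ≤ C, where d_p(N,N') := ((1/v)·∑_{j=1}^v |λ_j(N,N')|^p)^{1/p} and λ_j is the logarithmic relative spectrum. -/
open scoped BigOperators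

/-- A (complex, Hermitian-homogeneous) norm on a complex vector space, given as a function. -/
structure IsCNorm {V : Type*} [AddCommGroup V] [Module ℂ V] (N : V → ℝ) : Prop where
  nonneg : ∀ w, 0 ≤ N w
  eq_zero : ∀ w, N w = 0 → w = 0
  smul : ∀ (c : ℂ) (w : V), N (c • w) = ‖c‖ * N w
  triangle : ∀ w w', N (w + w') ≤ N w + N w'

/-- The `j`-th logarithmic relative spectrum of the norm `N` with respect to `N'`:
`λ_j(N,N') = sup_{W ⊆ V, dim W = j} inf_{w ∈ W \ {0}} log (N' w / N w)`. -/
noncomputable def logSpec {V : Type*} [AddCommGroup V] [Module ℂ V]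
    (N N' : V → ℝ) (j : ℕ) : ℝ :=
  sSup {r : ℝ | ∃ W : Submodule ℂ V, Module.finrank ℂ ↥W = j ∧
    r = sInf {s : ℝ | ∃ w : V, w ∈ W ∧ w ≠ 0 ∧ s = Real.log (N' w / N w)}}

/-- The quasi-distance `d_p(N,N') = ((1/v) ∑_{j=1}^v |λ_j(N,N')|^p)^(1/p)`. -/
noncomputable def dp {V : Type*} [AddCommGroup V] [Module ℂ V]
    (p : ℝ) (v : ℕ) (N N' : V → ℝ) : ℝ :=
  ((∑ j ∈ Finset.Icc 1 v, |logSpec N N' j| ^ p) / (v : ℝ)) ^ (1 / p)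

/-- Auxiliary: two nonempty sets within Hausdorff distance `C` have `sInf`s within `C`. -/
lemma aux_abs_sInf_sub_sInf_le {A B : Set ℝ} {C : ℝ} (hC : 0 ≤ C)
    (hA : A.Nonempty) (hB : B.Nonempty)
    (hAB : ∀ a ∈ A, ∃ b ∈ B, |a - b| ≤ C) (hBA : ∀ b ∈ B, ∃ a ∈ A, |b - a| ≤ C) :
    |sInf A - sInf B| ≤ C := by
  by_cases hbB : BddBelow B
  · have hbA : BddBelow A := by
      obtain ⟨m, hm⟩ := hbB
      refine ⟨m - C, fun a ha => ?_⟩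
      obtain ⟨b, hb, hab⟩ := hAB a ha
      have := abs_le.1 hab
      linarith [hm hb]
    have h1 : sInf B - C ≤ sInf A := by
      refine le_csInf hA fun a ha => ?_
      obtain ⟨b, hb, hab⟩ := hAB a ha
      have := abs_le.1 hab
      linarith [csInf_le hbB hb]
    have h2 : sInf A - C ≤ sInf B := by
      refine le_csInf hB fun b hb => ?_
      obtain ⟨a, ha, hba⟩ := hBA b hb
      have := abs_le.1 hba
      linarith [csInf_le hbA ha]
    rw [abs_le]; constructor <;> linarith
  · have hbA : ¬ BddBelow A := by
      intro ⟨m, hm⟩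
      apply hbB
      refine ⟨m - C, fun b hb => ?_⟩
      obtain ⟨a, ha, hba⟩ := hBA b hb
      have := abs_le.1 hba
      linarith [hm ha]
    rw [Real.sInf_of_not_bddBelow hbA, Real.sInf_of_not_bddBelow hbB]
    simpa using hC

/-- Auxiliary: two nonempty sets within Hausdorff distance `C` have `sSup`s within `C`. -/
lemma aux_abs_sSup_sub_sSup_le {A B : Set ℝ} {C : ℝ} (hC : 0 ≤ C)
    (hA : A.Nonempty) (hB : B.Nonempty)
    (hAB : ∀ a ∈ A, ∃ b ∈ B, |a - b| ≤ C) (hBA : ∀ b ∈ B, ∃ a ∈ A, |b - a| ≤ C) :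
    |sSup A - sSup B| ≤ C := by
  by_cases hbB : BddAbove B
  · have hbA : BddAbove A := by
      obtain ⟨m, hm⟩ := hbB
      refine ⟨m + C, fun a ha => ?_⟩
      obtain ⟨b, hb, hab⟩ := hAB a ha
      have := abs_le.1 hab
      linarith [hm hb]
    have h1 : sSup A ≤ sSup B + C := by
      refine csSup_le hA fun a ha => ?_
      obtain ⟨b, hb, hab⟩ := hAB a ha
      have := abs_le.1 hab
      linarith [le_csSup hbB hb]
    have h2 : sSup B ≤ sSup A + C := by
      refine csSup_le hB fun b hb => ?_
      obtain ⟨a, ha, hba⟩ := hBA b hb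
      have := abs_le.1 hba
      linarith [le_csSup hbA ha]
    rw [abs_le]; constructor <;> linarith
  · have hbA : ¬ BddAbove A := by
      intro ⟨m, hm⟩
      apply hbB
      refine ⟨m + C, fun b hb => ?_⟩
      obtain ⟨a, ha, hba⟩ := hBA b hb
      have := abs_le.1 hba
      linarith [hm ha]
    rw [Real.sSup_of_not_bddAbove hbA, Real.sSup_of_not_bddAbove hbB]
    simpa using hC

/-- Auxiliary: one-sided Lipschitz estimate for the normalized `ℓ^p` expression. -/
lemma aux_lp_le {ι : Type*} (s : Finset ι) (a b : ι → ℝ) {C p : ℝ} (hC : 0 ≤ C)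
    (hp : 1 ≤ p) {v : ℝ} (hv : 0 < v) (hcard : (s.card : ℝ) = v)
    (hab : ∀ i ∈ s, |b i - a i| ≤ C) :
    ((∑ i ∈ s, |b i| ^ p) / v) ^ (1 / p) ≤ ((∑ i ∈ s, |a i| ^ p) / v) ^ (1 / p) + C := by
  have hp0 : 0 < p := lt_of_lt_of_le zero_lt_one hp
  have h1p : 0 < 1 / p := by positivity
  have hA : 0 ≤ ∑ i ∈ s, |a i| ^ p :=
    Finset.sum_nonneg fun i _ => Real.rpow_nonneg (abs_nonneg _) _
  have hB : 0 ≤ ∑ i ∈ s, |b i| ^ p :=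
    Finset.sum_nonneg fun i _ => Real.rpow_nonneg (abs_nonneg _) _
  rw [Real.div_rpow hB hv.le, Real.div_rpow hA hv.le]
  rw [div_add' _ _ _ (ne_of_gt (Real.rpow_pos_of_pos hv _)),
    div_le_div_iff_of_pos_right (Real.rpow_pos_of_pos hv _)]
  have key : (∑ i ∈ s, |b i| ^ p) ^ (1 / p) ≤
      (∑ i ∈ s, |a i| ^ p) ^ (1 / p) + (∑ i ∈ s, |b i - a i| ^ p) ^ (1 / p) := by
    have := Real.Lp_add_le s a (fun i => b i - a i) hp
    simpa using this
  refine key.trans (add_le_add_right ?_ _)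
  have h2 : (∑ i ∈ s, |b i - a i| ^ p) ≤ ∑ i ∈ s, C ^ p :=
    Finset.sum_le_sum fun i hi => Real.rpow_le_rpow (abs_nonneg _) (hab i hi) hp0.le
  calc (∑ i ∈ s, |b i - a i| ^ p) ^ (1 / p)
      ≤ (∑ i ∈ s, C ^ p) ^ (1 / p) := by
        exact Real.rpow_le_rpow (Finset.sum_nonneg fun i _ =>
          Real.rpow_nonneg (abs_nonneg _) _) h2 h1p.le
    _ = (v * C ^ p) ^ (1 / p) := by rw [Finset.sum_const, nsmul_eq_mul, hcard]
    _ = C * v ^ (1 / p) := by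
        rw [Real.mul_rpow hv.le (Real.rpow_nonneg hC _), ← Real.rpow_mul hC,
          mul_one_div, div_self (ne_of_gt hp0), Real.rpow_one, mul_comm]

/-- If `e^{-C} N₁ ≤ N₂ ≤ e^C N₁` pointwise, then `|d_p(N₀,N₁) - d_p(N₀,N₂)| ≤ C`. -/
theorem abs_dp_sub_dp_le {V : Type*} [AddCommGroup V] [Module ℂ V]
    [FiniteDimensional ℂ V] (v : ℕ) (hv : 1 ≤ v) (hdim : Module.finrank ℂ V = v)
    (N₀ N₁ N₂ : V → ℝ) (h₀ : IsCNorm N₀) (h₁ : IsCNorm N₁) (h₂ : IsCNorm N₂)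
    (C : ℝ) (hC : 0 < C)
    (hlow : ∀ w, Real.exp (-C) * N₁ w ≤ N₂ w) (hup : ∀ w, N₂ w ≤ Real.exp C * N₁ w)
    (p : ℝ) (hp : 1 ≤ p) :
    |dp p v N₀ N₁ - dp p v N₀ N₂| ≤ C := by
  -- positivity of the norms on nonzero vectors
  have pos : ∀ (N : V → ℝ), IsCNorm N → ∀ w : V, w ≠ 0 → 0 < N w := by
    intro N hN w hw
    rcases lt_or_eq_of_le (hN.nonneg w) with h | h
    · exact h
    · exact absurd (hN.eq_zero w h.symm) hw
  -- pointwise comparison of the logarithmic ratios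
  have hpt : ∀ w : V, w ≠ 0 →
      |Real.log (N₁ w / N₀ w) - Real.log (N₂ w / N₀ w)| ≤ C := by
    intro w hw
    have h0 := pos N₀ h₀ w hw
    have h1 := pos N₁ h₁ w hw
    have h2 := pos N₂ h₂ w hw
    rw [Real.log_div (ne_of_gt h1) (ne_of_gt h0),
      Real.log_div (ne_of_gt h2) (ne_of_gt h0)]
    have hu : Real.log (N₂ w) ≤ C + Real.log (N₁ w) := by
      have := Real.log_le_log h2 (hup w)
      rwa [Real.log_mul (Real.exp_ne_zero C) (ne_of_gt h1), Real.log_exp] at this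
    have hl : Real.log (N₁ w) - C ≤ Real.log (N₂ w) := by
      have hpos : 0 < Real.exp (-C) * N₁ w := by positivity
      have := Real.log_le_log hpos (hlow w)
      rw [Real.log_mul (Real.exp_ne_zero _) (ne_of_gt h1), Real.log_exp] at this
      linarith
    rw [abs_le]; constructor <;> linarith
  -- comparison of the logarithmic spectra
  have hlam : ∀ j ∈ Finset.Icc 1 v, |logSpec N₀ N₁ j - logSpec N₀ N₂ j| ≤ C := by
    intro j hj
    rw [Finset.mem_Icc] at hj
    obtain ⟨hj1, hjv⟩ := hj
    -- there exists a submodule of finrank j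
    have hWex : ∃ W : Submodule ℂ V, Module.finrank ℂ ↥W = j := by
      have hb : j ≤ Module.finrank ℂ V := by omega
      let bV := Module.finBasis ℂ V
      refine ⟨Submodule.span ℂ (Set.range
        (⇑bV ∘ Fin.castLE (show j ≤ Module.finrank ℂ V from hb))), ?_⟩
      rw [finrank_span_eq_card (bV.linearIndependent.comp _
        (Fin.castLE_injective _))]
      simp
    -- the inner sets
    set S₁ := fun W : Submodule ℂ V =>
      {s : ℝ | ∃ w : V, w ∈ W ∧ w ≠ 0 ∧ s = Real.log (N₁ w / N₀ w)} with hS₁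
    set S₂ := fun W : Submodule ℂ V =>
      {s : ℝ | ∃ w : V, w ∈ W ∧ w ≠ 0 ∧ s = Real.log (N₂ w / N₀ w)} with hS₂
    have hinner : ∀ W : Submodule ℂ V, Module.finrank ℂ ↥W = j →
        |sInf (S₁ W) - sInf (S₂ W)| ≤ C := by
      intro W hW
      have hWne : ∃ w : V, w ∈ W ∧ w ≠ 0 := by
        have : W ≠ ⊥ := by
          intro h
          rw [h] at hW
          simp at hW
          omega
        obtain ⟨x, hx, hx0⟩ := Submodule.exists_mem_ne_zero_of_ne_bot this
        exact ⟨x, hx, hx0⟩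
      obtain ⟨w₀, hw₀, hw₀0⟩ := hWne
      refine aux_abs_sInf_sub_sInf_le hC.le
        ⟨_, ⟨w₀, hw₀, hw₀0, rfl⟩⟩ ⟨_, ⟨w₀, hw₀, hw₀0, rfl⟩⟩ ?_ ?_
      · rintro a ⟨w, hw, hw0, rfl⟩
        exact ⟨Real.log (N₂ w / N₀ w), ⟨w, hw, hw0, rfl⟩, hpt w hw0⟩
      · rintro b ⟨w, hw, hw0, rfl⟩
        refine ⟨Real.log (N₁ w / N₀ w), ⟨w, hw, hw0, rfl⟩, ?_⟩
        rw [abs_sub_comm]; exact hpt w hw0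
    obtain ⟨W₀, hW₀⟩ := hWex
    unfold logSpec
    refine aux_abs_sSup_sub_sSup_le hC.le ⟨_, W₀, hW₀, rfl⟩ ⟨_, W₀, hW₀, rfl⟩ ?_ ?_
    · rintro a ⟨W, hW, rfl⟩
      exact ⟨sInf (S₂ W), ⟨W, hW, rfl⟩, hinner W hW⟩
    · rintro b ⟨W, hW, rfl⟩
      refine ⟨sInf (S₁ W), ⟨W, hW, rfl⟩, ?_⟩
      rw [abs_sub_comm]; exact hinner W hW
  -- conclude via the ℓ^p Lipschitz estimate
  have hvpos : (0 : ℝ) < v := by exact_mod_cast hv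
  have hcard : ((Finset.Icc 1 v).card : ℝ) = v := by
    rw [Nat.card_Icc]; push_cast; ring_nf
  have h12 : dp p v N₀ N₂ ≤ dp p v N₀ N₁ + C := by
    unfold dp
    refine aux_lp_le _ _ _ hC.le hp hvpos hcard fun j hj => ?_
    rw [abs_sub_comm]
    exact hlam j hj
  have h21 : dp p v N₀ N₁ ≤ dp p v N₀ N₂ + C := by
    unfold dp
    refine aux_lp_le _ _ _ hC.le hp hvpos hcard fun j hj => ?_
    exact hlam j hj
  rw [abs_le]; constructor <;> linarith
end

section
/- Let V be a finite-dimensional complex vector space of dimension v, E ⊆ V a subspace of dimension e, and N₀ ≤ N₁ two norms on V with N₁ ≤ e^C·N₀ for some C ≥ 0. Then for every p ∈ [1,∞), |v·d_p(N₀,N₁)^p − e·d_p(N₀|_E, N₁|_E)^p| ≤ (v − e)·C^p, where N|_E denotes the restriction of the norm N to E. -/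
open scoped BigOperators

/-- Existence of a submodule of any dimension at most that of a given submodule. -/
lemma my_exists_submodule_le {V : Type*} [AddCommGroup V] [Module ℂ V] [FiniteDimensional ℂ V]
    (W : Submodule ℂ V) (j : ℕ) (h : j ≤ Module.finrank ℂ ↥W) :
    ∃ U : Submodule ℂ V, U ≤ W ∧ Module.finrank ℂ ↥U = j := by
  obtain ⟨b, hb⟩ := exists_linearIndependent_of_le_finrank (R := ℂ) (M := ↥W) h
  refine ⟨(Submodule.span ℂ (Set.range b)).map W.subtype, Submodule.map_subtype_le _ _, ?_⟩
  rw [Submodule.finrank_map_subtype_eq, finrank_span_eq_card hb, Fintype.card_fin]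

/-- Every element of the set defining `logSpec` lies in `[0, C]`. -/
lemma mem_Icc_of_mem_logSpecSet {V : Type*} [AddCommGroup V] [Module ℂ V]
    (N₀ N₁ : V → ℝ) (C : ℝ)
    (hf : ∀ w : V, w ≠ 0 → Real.log (N₁ w / N₀ w) ∈ Set.Icc 0 C)
    {j : ℕ} (hj : 1 ≤ j) {r : ℝ}
    (hr : r ∈ {r : ℝ | ∃ W : Submodule ℂ V, Module.finrank ℂ ↥W = j ∧
      r = sInf {s : ℝ | ∃ w : V, w ∈ W ∧ w ≠ 0 ∧ s = Real.log (N₁ w / N₀ w)}}) :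
    r ∈ Set.Icc 0 C := by
  obtain ⟨W, hW, rfl⟩ := hr
  have hWbot : W ≠ ⊥ := by
    intro h
    rw [h, finrank_bot] at hW
    omega
  obtain ⟨w, hwW, hw0⟩ := Submodule.exists_mem_ne_zero_of_ne_bot hWbot
  set T := {s : ℝ | ∃ w : V, w ∈ W ∧ w ≠ 0 ∧ s = Real.log (N₁ w / N₀ w)} with hT
  have hTne : T.Nonempty := ⟨_, w, hwW, hw0, rfl⟩
  have hTsub : T ⊆ Set.Icc 0 C := by
    rintro s ⟨u, -, hu0, rfl⟩
    exact hf u hu0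
  constructor
  · exact le_csInf hTne fun s hs => (hTsub hs).1
  · obtain ⟨s, hs⟩ := hTne
    exact csInf_le_of_le ⟨0, fun t ht => (hTsub ht).1⟩ hs (hTsub hs).2

/-- `logSpec` lies in `[0, C]`. -/
lemma logSpec_mem_Icc {V : Type*} [AddCommGroup V] [Module ℂ V] [FiniteDimensional ℂ V]
    (N₀ N₁ : V → ℝ) (C : ℝ)
    (hf : ∀ w : V, w ≠ 0 → Real.log (N₁ w / N₀ w) ∈ Set.Icc 0 C)
    {j : ℕ} (hj : 1 ≤ j) (hjv : j ≤ Module.finrank ℂ V) :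
    logSpec N₀ N₁ j ∈ Set.Icc 0 C := by
  obtain ⟨U, -, hU⟩ := my_exists_submodule_le (⊤ : Submodule ℂ V) j (by rwa [finrank_top])
  set S := {r : ℝ | ∃ W : Submodule ℂ V, Module.finrank ℂ ↥W = j ∧
      r = sInf {s : ℝ | ∃ w : V, w ∈ W ∧ w ≠ 0 ∧ s = Real.log (N₁ w / N₀ w)}} with hS
  have hSne : S.Nonempty := ⟨_, U, hU, rfl⟩
  have hSsub : S ⊆ Set.Icc 0 C := fun r hr => mem_Icc_of_mem_logSpecSet N₀ N₁ C hf hj hr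
  have hbdd : BddAbove S := ⟨C, fun r hr => (hSsub hr).2⟩
  rw [logSpec, ← hS]
  constructor
  · obtain ⟨r, hr⟩ := hSne
    exact le_trans (hSsub hr).1 (le_csSup hbdd hr)
  · exact csSup_le hSne fun r hr => (hSsub hr).2

/-- The restricted `logSpec` is at most the ambient one. -/
lemma logSpec_restrict_le {V : Type*} [AddCommGroup V] [Module ℂ V] [FiniteDimensional ℂ V]
    (E : Submodule ℂ V) (N₀ N₁ : V → ℝ) (C : ℝ)
    (hf : ∀ w : V, w ≠ 0 → Real.log (N₁ w / N₀ w) ∈ Set.Icc 0 C)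
    {j : ℕ} (hj : 1 ≤ j) (hjE : j ≤ Module.finrank ℂ ↥E) :
    logSpec (fun w : ↥E => N₀ ↑w) (fun w : ↥E => N₁ ↑w) j ≤ logSpec N₀ N₁ j := by
  have hfE : ∀ w : ↥E, w ≠ 0 → Real.log (N₁ ↑w / N₀ ↑w) ∈ Set.Icc 0 C := by
    intro w hw
    exact hf ↑w (fun h => hw (by exact_mod_cast h))
  set SE := {r : ℝ | ∃ W : Submodule ℂ ↥E, Module.finrank ℂ ↥W = j ∧
      r = sInf {s : ℝ | ∃ w : ↥E, w ∈ W ∧ w ≠ 0 ∧ s = Real.log (N₁ ↑w / N₀ ↑w)}} with hSE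
  set SV := {r : ℝ | ∃ W : Submodule ℂ V, Module.finrank ℂ ↥W = j ∧
      r = sInf {s : ℝ | ∃ w : V, w ∈ W ∧ w ≠ 0 ∧ s = Real.log (N₁ w / N₀ w)}} with hSV
  have hbdd : BddAbove SV :=
    ⟨C, fun r hr => (mem_Icc_of_mem_logSpecSet N₀ N₁ C hf hj hr).2⟩
  have hSEne : SE.Nonempty := by
    obtain ⟨U, -, hU⟩ := my_exists_submodule_le (⊤ : Submodule ℂ ↥E) j (by rwa [finrank_top])
    exact ⟨_, U, hU, rfl⟩
  have hsub : SE ⊆ SV := by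
    rintro r ⟨W, hW, rfl⟩
    refine ⟨W.map E.subtype, by rw [Submodule.finrank_map_subtype_eq, hW], ?_⟩
    congr 1
    ext s
    constructor
    · rintro ⟨x, hx, hx0, rfl⟩
      exact ⟨↑x, Submodule.mem_map.mpr ⟨x, hx, rfl⟩, fun h => hx0 (by exact_mod_cast h), rfl⟩
    · rintro ⟨w, hw, hw0, rfl⟩
      obtain ⟨x, hx, rfl⟩ := Submodule.mem_map.mp hw
      exact ⟨x, hx, fun h => hw0 (by simp [h]), rfl⟩
  exact csSup_le_csSup hbdd hSEne hsub

/-- Interlacing: the ambient `logSpec` at index `j + k` is at most the restricted one at `j`. -/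
lemma logSpec_le_logSpec_restrict {V : Type*} [AddCommGroup V] [Module ℂ V]
    [FiniteDimensional ℂ V] (E : Submodule ℂ V) (N₀ N₁ : V → ℝ) (C : ℝ)
    (hf : ∀ w : V, w ≠ 0 → Real.log (N₁ w / N₀ w) ∈ Set.Icc 0 C)
    {j k : ℕ} (hj : 1 ≤ j) (hjE : j ≤ Module.finrank ℂ ↥E)
    (hjk : j + k ≤ Module.finrank ℂ V) (hk : Module.finrank ℂ V ≤ Module.finrank ℂ ↥E + k) :
    logSpec N₀ N₁ (j + k) ≤ logSpec (fun w : ↥E => N₀ ↑w) (fun w : ↥E => N₁ ↑w) j := by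
  have hfE : ∀ w : ↥E, w ≠ 0 → Real.log (N₁ ↑w / N₀ ↑w) ∈ Set.Icc 0 C := by
    intro w hw
    exact hf ↑w (fun h => hw (by exact_mod_cast h))
  set SE := {r : ℝ | ∃ W : Submodule ℂ ↥E, Module.finrank ℂ ↥W = j ∧
      r = sInf {s : ℝ | ∃ w : ↥E, w ∈ W ∧ w ≠ 0 ∧ s = Real.log (N₁ ↑w / N₀ ↑w)}} with hSE
  have hbddE : BddAbove SE :=
    ⟨C, fun r hr => (mem_Icc_of_mem_logSpecSet _ _ C hfE hj hr).2⟩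
  have hSVne : {r : ℝ | ∃ W : Submodule ℂ V, Module.finrank ℂ ↥W = j + k ∧
      r = sInf {s : ℝ | ∃ w : V, w ∈ W ∧ w ≠ 0 ∧ s = Real.log (N₁ w / N₀ w)}}.Nonempty := by
    obtain ⟨U, -, hU⟩ := my_exists_submodule_le (⊤ : Submodule ℂ V) (j + k) (by rwa [finrank_top])
    exact ⟨_, U, hU, rfl⟩
  rw [logSpec]
  refine csSup_le hSVne ?_
  rintro r ⟨W, hW, rfl⟩
  -- dimension counting
  have h1 := Submodule.finrank_sup_add_finrank_inf_eq W E
  have h2 : Module.finrank ℂ ↥(W ⊔ E) ≤ Module.finrank ℂ V := Submodule.finrank_le _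
  have hcomap : Module.finrank ℂ ↥((W ⊓ E).comap E.subtype) = Module.finrank ℂ ↥(W ⊓ E) := by
    rw [← Submodule.finrank_map_subtype_eq E ((W ⊓ E).comap E.subtype),
      Submodule.map_comap_subtype, inf_eq_right.mpr (inf_le_right : W ⊓ E ≤ E)]
  have h3 : j ≤ Module.finrank ℂ ↥((W ⊓ E).comap E.subtype) := by
    rw [hcomap]; omega
  obtain ⟨U, hUle, hU⟩ := my_exists_submodule_le ((W ⊓ E).comap E.subtype) j h3
  -- the inner sets
  set TW := {s : ℝ | ∃ w : V, w ∈ W ∧ w ≠ 0 ∧ s = Real.log (N₁ w / N₀ w)} with hTW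
  set TU := {s : ℝ | ∃ w : ↥E, w ∈ U ∧ w ≠ 0 ∧ s = Real.log (N₁ ↑w / N₀ ↑w)} with hTU
  have hTUne : TU.Nonempty := by
    have hUbot : U ≠ ⊥ := by
      intro h
      rw [h, finrank_bot] at hU
      omega
    obtain ⟨u, hu, hu0⟩ := Submodule.exists_mem_ne_zero_of_ne_bot hUbot
    exact ⟨_, u, hu, hu0, rfl⟩
  have hTWbdd : BddBelow TW := by
    refine ⟨0, ?_⟩
    rintro s ⟨u, -, hu0, rfl⟩
    exact (hf u hu0).1
  have hstep : sInf TW ≤ sInf TU := by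
    refine le_csInf hTUne ?_
    rintro s ⟨x, hxU, hx0, rfl⟩
    have hxW : (↑x : V) ∈ W := by
      have := hUle hxU
      exact (Submodule.mem_comap.mp this).1
    exact csInf_le hTWbdd ⟨↑x, hxW, fun h => hx0 (by exact_mod_cast h), rfl⟩
  have hmem : sInf TU ∈ SE := ⟨U, hU, rfl⟩
  exact le_trans hstep (le_csSup hbddE hmem)

/-- `n * dp^p` equals the sum of `p`-th powers of the spectra. -/
lemma dp_pow_eq {W : Type*} [AddCommGroup W] [Module ℂ W] {p : ℝ} (hp : 1 ≤ p)
    (n : ℕ) (hn : 0 < n) (M₀ M₁ : W → ℝ) :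
    (n : ℝ) * dp p n M₀ M₁ ^ p = ∑ j ∈ Finset.Icc 1 n, |logSpec M₀ M₁ j| ^ p := by
  have hp0 : p ≠ 0 := by linarith
  have hS : 0 ≤ ∑ j ∈ Finset.Icc 1 n, |logSpec M₀ M₁ j| ^ p :=
    Finset.sum_nonneg fun j _ => Real.rpow_nonneg (abs_nonneg _) p
  have hn' : (0 : ℝ) < n := by exact_mod_cast hn
  rw [dp, ← Real.rpow_mul (div_nonneg hS hn'.le), one_div_mul_cancel hp0, Real.rpow_one,
    mul_comm, div_mul_cancel₀ _ hn'.ne']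

/-- Comparison of `d_p`-distances on a vector space and on a subspace: if
`N₀ ≤ N₁ ≤ e^C N₀`, then `|v d_p(N₀,N₁)^p - e d_p(N₀|_E,N₁|_E)^p| ≤ (v-e) C^p`. -/
theorem dp_restrict_compare {V : Type*} [AddCommGroup V] [Module ℂ V]
    [FiniteDimensional ℂ V] (v e : ℕ) (hv : 1 ≤ v) (hdim : Module.finrank ℂ V = v)
    (E : Submodule ℂ V) (he : 1 ≤ e) (hdimE : Module.finrank ℂ ↥E = e)
    (N₀ N₁ : V → ℝ) (h₀ : IsCNorm N₀) (h₁ : IsCNorm N₁)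
    (C : ℝ) (hC : 0 ≤ C)
    (hle : ∀ w, N₀ w ≤ N₁ w) (hup : ∀ w, N₁ w ≤ Real.exp C * N₀ w)
    (p : ℝ) (hp : 1 ≤ p) :
    |(v : ℝ) * dp p v N₀ N₁ ^ p -
        (e : ℝ) * dp p e (fun w : ↥E => N₀ ↑w) (fun w : ↥E => N₁ ↑w) ^ p| ≤
      ((v : ℝ) - (e : ℝ)) * C ^ p := by
  have hpos : ∀ w : V, w ≠ 0 → 0 < N₀ w := fun w hw =>
    lt_of_le_of_ne (h₀.nonneg w) fun h => hw (h₀.eq_zero w h.symm)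
  have hf : ∀ w : V, w ≠ 0 → Real.log (N₁ w / N₀ w) ∈ Set.Icc 0 C := by
    intro w hw
    have h0 := hpos w hw
    constructor
    · exact Real.log_nonneg ((one_le_div h0).mpr (hle w))
    · rw [Real.log_le_iff_le_exp (div_pos (lt_of_lt_of_le h0 (hle w)) h0)]
      exact (div_le_iff₀ h0).mpr (hup w)
  have hCp : 0 ≤ C ^ p := Real.rpow_nonneg hC p
  have hev : e ≤ v := by
    rw [← hdim, ← hdimE]; exact Submodule.finrank_le E
  set k := v - e with hk
  -- spectra bounds
  have hV : ∀ j, 1 ≤ j → j ≤ v → logSpec N₀ N₁ j ∈ Set.Icc 0 C := fun j h1 h2 =>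
    logSpec_mem_Icc N₀ N₁ C hf h1 (by omega)
  have hE : ∀ j, 1 ≤ j → j ≤ e →
      logSpec (fun w : ↥E => N₀ ↑w) (fun w : ↥E => N₁ ↑w) j ∈ Set.Icc 0 C := by
    intro j h1 h2
    have hfE : ∀ w : ↥E, w ≠ 0 → Real.log (N₁ ↑w / N₀ ↑w) ∈ Set.Icc 0 C := fun w hw =>
      hf ↑w fun h => hw (by exact_mod_cast h)
    exact logSpec_mem_Icc _ _ C hfE h1 (by omega)
  rw [dp_pow_eq hp v hv N₀ N₁, dp_pow_eq hp e he _ _]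
  set a : ℕ → ℝ := fun j => |logSpec N₀ N₁ j| ^ p with ha
  set b : ℕ → ℝ := fun j => |logSpec (fun w : ↥E => N₀ ↑w) (fun w : ↥E => N₁ ↑w) j| ^ p with hb
  have ha_nonneg : ∀ j, 0 ≤ a j := fun j => Real.rpow_nonneg (abs_nonneg _) p
  have hb_nonneg : ∀ j, 0 ≤ b j := fun j => Real.rpow_nonneg (abs_nonneg _) p
  have hp0 : 0 ≤ p := by linarith
  have ha_le : ∀ j, 1 ≤ j → j ≤ v → a j ≤ C ^ p := by
    intro j h1 h2
    have := hV j h1 h2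
    exact Real.rpow_le_rpow (abs_nonneg _) (by rw [abs_of_nonneg this.1]; exact this.2) hp0
  have hba : ∀ j, 1 ≤ j → j ≤ e → b j ≤ a j := by
    intro j h1 h2
    have hBE := hE j h1 h2
    have hBV := hV j h1 (by omega)
    have hle' : logSpec (fun w : ↥E => N₀ ↑w) (fun w : ↥E => N₁ ↑w) j ≤ logSpec N₀ N₁ j :=
      logSpec_restrict_le E N₀ N₁ C hf h1 (by omega)
    exact Real.rpow_le_rpow (abs_nonneg _)
      (by rw [abs_of_nonneg hBE.1, abs_of_nonneg hBV.1]; exact hle') hp0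
  have hshift : ∀ j, 1 ≤ j → j ≤ e → a (j + k) ≤ b j := by
    intro j h1 h2
    have hBE := hE j h1 h2
    have hBV := hV (j + k) (by omega) (by omega)
    have hle' : logSpec N₀ N₁ (j + k) ≤
        logSpec (fun w : ↥E => N₀ ↑w) (fun w : ↥E => N₁ ↑w) j :=
      logSpec_le_logSpec_restrict E N₀ N₁ C hf h1 (by omega) (by omega) (by omega)
    exact Real.rpow_le_rpow (abs_nonneg _)
      (by rw [abs_of_nonneg hBV.1, abs_of_nonneg hBE.1]; exact hle') hp0
  -- sums
  have hsplit : ∑ j ∈ Finset.Icc 1 v, a j =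
      ∑ j ∈ Finset.Icc 1 k, a j + ∑ j ∈ Finset.Icc 1 e, a (j + k) := by
    rw [(show Finset.Icc 1 v = Finset.Ioc 0 v from Finset.Icc_add_one_left_eq_Ioc (a := 0) (b := v)), (show Finset.Icc 1 k = Finset.Ioc 0 k from Finset.Icc_add_one_left_eq_Ioc (a := 0) (b := k)), (show Finset.Icc 1 e = Finset.Ioc 0 e from Finset.Icc_add_one_left_eq_Ioc (a := 0) (b := e)),
      ← Finset.sum_Ioc_consecutive a (Nat.zero_le k) (by omega : k ≤ v)]
    congr 1
    have hmap : (Finset.Ioc 0 e).map (addRightEmbedding k) = Finset.Ioc k v := by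
      rw [Finset.map_add_right_Ioc]
      congr 1 <;> omega
    rw [← hmap, Finset.sum_map]
    rfl
  have hSE_le : ∑ j ∈ Finset.Icc 1 e, b j ≤ ∑ j ∈ Finset.Icc 1 v, a j := by
    calc ∑ j ∈ Finset.Icc 1 e, b j ≤ ∑ j ∈ Finset.Icc 1 e, a j := by
          refine Finset.sum_le_sum fun j hj => ?_
          rw [Finset.mem_Icc] at hj
          exact hba j hj.1 hj.2
      _ ≤ ∑ j ∈ Finset.Icc 1 v, a j := by
          refine Finset.sum_le_sum_of_subset_of_nonneg ?_ fun j _ _ => ha_nonneg j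
          exact Finset.Icc_subset_Icc le_rfl hev
  have hupper : ∑ j ∈ Finset.Icc 1 v, a j - ∑ j ∈ Finset.Icc 1 e, b j ≤ (k : ℝ) * C ^ p := by
    rw [hsplit]
    have h1 : ∑ j ∈ Finset.Icc 1 k, a j ≤ (k : ℝ) * C ^ p := by
      calc ∑ j ∈ Finset.Icc 1 k, a j ≤ ∑ _j ∈ Finset.Icc 1 k, C ^ p := by
            refine Finset.sum_le_sum fun j hj => ?_
            rw [Finset.mem_Icc] at hj
            exact ha_le j hj.1 (by omega)
        _ = (k : ℝ) * C ^ p := by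
            rw [Finset.sum_const, Nat.card_Icc, nsmul_eq_mul, Nat.add_sub_cancel]
    have h2 : ∑ j ∈ Finset.Icc 1 e, a (j + k) ≤ ∑ j ∈ Finset.Icc 1 e, b j := by
      refine Finset.sum_le_sum fun j hj => ?_
      rw [Finset.mem_Icc] at hj
      exact hshift j hj.1 hj.2
    linarith
  have hcast : ((k : ℕ) : ℝ) = (v : ℝ) - (e : ℝ) := by
    rw [hk, Nat.cast_sub hev]
  rw [abs_of_nonneg (by linarith), ← hcast]
  exact hupper
end

section
/- Let V be a finite-dimensional complex vector space of dimension v, E ⊆ V a subspace of dimension e, and N₀, N₁ norms on V. Then for every i = 1,…,e, the logarithmic relative spectra satisfy the interlacing inequalities λ_i(N₀,N₁) ≥ λ_i(N₀|_E, N₁|_E) ≥ λ_{i+v−e}(N₀,N₁). -/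
open scoped BigOperators

open Module

private lemma isCNorm_compare {V : Type*} [AddCommGroup V] [Module ℂ V] [FiniteDimensional ℂ V]
    {N : V → ℝ} (h : IsCNorm N) {n : ℕ} (φ : (Fin n → ℂ) ≃ₗ[ℂ] V) :
    ∃ C > 0, ∀ x : Fin n → ℂ, N (φ x) ≤ C * ‖x‖ ∧ ‖x‖ ≤ C * N (φ x) := by
  have h0 : N 0 = 0 := by have := h.smul 0 0; simpa using this
  letI : NormedAddCommGroup V := AddGroupNorm.toNormedAddCommGroup
    { toFun := N
      map_zero' := h0
      add_le' := h.triangle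
      neg' := fun w => by have := h.smul (-1) w; simpa using this
      eq_zero_of_map_eq_zero' := h.eq_zero }
  letI : NormedSpace ℂ V := ⟨fun c x => by
    change N (c • x) ≤ ‖c‖ * N x
    exact le_of_eq (h.smul c x)⟩
  let f : (Fin n → ℂ) →L[ℂ] V :=
    ⟨φ.toLinearMap, φ.toLinearMap.continuous_of_finiteDimensional⟩
  let g : V →L[ℂ] (Fin n → ℂ) :=
    ⟨φ.symm.toLinearMap, φ.symm.toLinearMap.continuous_of_finiteDimensional⟩
  refine ⟨max ‖f‖ ‖g‖ + 1, by positivity, fun x => ?_⟩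
  constructor
  · calc N (φ x) = ‖f x‖ := rfl
      _ ≤ ‖f‖ * ‖x‖ := f.le_opNorm x
      _ ≤ (max ‖f‖ ‖g‖ + 1) * ‖x‖ := by
          apply mul_le_mul_of_nonneg_right _ (norm_nonneg x)
          exact le_trans (le_max_left _ _) (by linarith)
  · calc ‖x‖ = ‖g (φ x)‖ := by simp [g, f]
      _ ≤ ‖g‖ * ‖φ x‖ := g.le_opNorm _
      _ = ‖g‖ * N (φ x) := rfl
      _ ≤ (max ‖f‖ ‖g‖ + 1) * N (φ x) := by
          apply mul_le_mul_of_nonneg_right _ (norm_nonneg (φ x))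
          exact le_trans (le_max_right _ _) (by linarith)

private lemma isCNorm_log_bound {V : Type*} [AddCommGroup V] [Module ℂ V]
    [FiniteDimensional ℂ V] {N₀ N₁ : V → ℝ} (h₀ : IsCNorm N₀) (h₁ : IsCNorm N₁) :
    ∃ M : ℝ, ∀ w : V, w ≠ 0 → |Real.log (N₁ w / N₀ w)| ≤ M := by
  let φ := (Module.finBasis ℂ V).equivFun.symm
  obtain ⟨C₀, hC₀, h0⟩ := isCNorm_compare h₀ φ
  obtain ⟨C₁, hC₁, h1⟩ := isCNorm_compare h₁ φ
  refine ⟨|Real.log (C₀ * C₁)|, fun w hw => ?_⟩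
  have hφx : φ (φ.symm w) = w := φ.apply_symm_apply w
  obtain ⟨hA0, hB0⟩ := h0 (φ.symm w)
  obtain ⟨hA1, hB1⟩ := h1 (φ.symm w)
  rw [hφx] at hA0 hB0 hA1 hB1
  have hN₀pos : 0 < N₀ w :=
    lt_of_le_of_ne (h₀.nonneg w) (fun h => hw (h₀.eq_zero w h.symm))
  have hN₁pos : 0 < N₁ w :=
    lt_of_le_of_ne (h₁.nonneg w) (fun h => hw (h₁.eq_zero w h.symm))
  have hKpos : 0 < C₀ * C₁ := mul_pos hC₀ hC₁
  have hub : N₁ w / N₀ w ≤ C₀ * C₁ := by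
    rw [div_le_iff₀ hN₀pos]
    nlinarith [hA1, hB0, hC₁.le, hN₀pos.le, norm_nonneg (φ.symm w)]
  have hlb : (C₀ * C₁)⁻¹ ≤ N₁ w / N₀ w := by
    rw [inv_le_iff_one_le_mul₀ hKpos, div_mul_eq_mul_div, le_div_iff₀ hN₀pos, one_mul]
    nlinarith [hA0, hB1, hC₀.le, hN₁pos.le, norm_nonneg (φ.symm w)]
  have hratpos : 0 < N₁ w / N₀ w := div_pos hN₁pos hN₀pos
  rw [abs_le]
  constructor
  · have h2 : Real.log (C₀ * C₁)⁻¹ ≤ Real.log (N₁ w / N₀ w) :=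
      Real.log_le_log (by positivity) hlb
    rw [Real.log_inv] at h2
    linarith [le_abs_self (Real.log (C₀ * C₁))]
  · have h2 : Real.log (N₁ w / N₀ w) ≤ Real.log (C₀ * C₁) :=
      Real.log_le_log hratpos hub
    linarith [le_abs_self (Real.log (C₀ * C₁))]

private lemma exists_submodule_finrank_eq_aux {V : Type*} [AddCommGroup V] [Module ℂ V]
    [FiniteDimensional ℂ V] (k : ℕ) (h : k ≤ finrank ℂ V) :
    ∃ U : Submodule ℂ V, finrank ℂ ↥U = k := by
  let b := finBasis ℂ V
  have li : LinearIndependent ℂ (b ∘ Fin.castLE h) :=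
    b.linearIndependent.comp _ (Fin.castLE_injective h)
  refine ⟨Submodule.span ℂ (Set.range (b ∘ Fin.castLE h)), ?_⟩
  rw [finrank_span_eq_card li, Fintype.card_fin]

private lemma exists_le_submodule_finrank_eq {V : Type*} [AddCommGroup V] [Module ℂ V]
    [FiniteDimensional ℂ V] (C : Submodule ℂ V) (k : ℕ) (h : k ≤ finrank ℂ ↥C) :
    ∃ U : Submodule ℂ V, U ≤ C ∧ finrank ℂ ↥U = k := by
  obtain ⟨U', hU'⟩ := exists_submodule_finrank_eq_aux (V := ↥C) k h
  exact ⟨U'.map C.subtype, Submodule.map_subtype_le _ _,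
    by rw [Submodule.finrank_map_subtype_eq]; exact hU'⟩

private lemma sInf_mem_Icc_of_subset {M : ℝ} {A : Set ℝ} (hne : A.Nonempty)
    (hsub : A ⊆ Set.Icc (-M) M) : sInf A ∈ Set.Icc (-M) M := by
  obtain ⟨a, ha⟩ := hne
  constructor
  · exact le_csInf ⟨a, ha⟩ fun x hx => (hsub hx).1
  · exact le_trans (csInf_le ⟨-M, fun x hx => (hsub hx).1⟩ ha) (hsub ha).2

private lemma interlace_general {V : Type*} [AddCommGroup V] [Module ℂ V]
    [FiniteDimensional ℂ V] (F : V → ℝ) (M : ℝ) (hM : ∀ w : V, w ≠ 0 → |F w| ≤ M)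
    (E : Submodule ℂ V) (v e i : ℕ) (hdim : finrank ℂ V = v) (hdimE : finrank ℂ ↥E = e)
    (hi : 1 ≤ i) (hie : i ≤ e) :
    (sSup {r : ℝ | ∃ W : Submodule ℂ ↥E, finrank ℂ ↥W = i ∧
        r = sInf {s : ℝ | ∃ w : ↥E, w ∈ W ∧ w ≠ 0 ∧ s = F ↑w}} ≤
      sSup {r : ℝ | ∃ W : Submodule ℂ V, finrank ℂ ↥W = i ∧
        r = sInf {s : ℝ | ∃ w : V, w ∈ W ∧ w ≠ 0 ∧ s = F w}}) ∧
    (sSup {r : ℝ | ∃ W : Submodule ℂ V, finrank ℂ ↥W = i + v - e ∧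
        r = sInf {s : ℝ | ∃ w : V, w ∈ W ∧ w ≠ 0 ∧ s = F w}} ≤
      sSup {r : ℝ | ∃ W : Submodule ℂ ↥E, finrank ℂ ↥W = i ∧
        r = sInf {s : ℝ | ∃ w : ↥E, w ∈ W ∧ w ≠ 0 ∧ s = F ↑w}}) := by
  have heV : e ≤ v := by rw [← hdim, ← hdimE]; exact E.finrank_le
  -- basic facts about the inner sets
  have hSsub : ∀ W : Submodule ℂ V,
      {s : ℝ | ∃ w : V, w ∈ W ∧ w ≠ 0 ∧ s = F w} ⊆ Set.Icc (-M) M := by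
    rintro W s ⟨w, -, hw, rfl⟩; exact abs_le.mp (hM w hw)
  have hSEsub : ∀ W : Submodule ℂ ↥E,
      {s : ℝ | ∃ w : ↥E, w ∈ W ∧ w ≠ 0 ∧ s = F ↑w} ⊆ Set.Icc (-M) M := by
    rintro W s ⟨w, -, hw, rfl⟩
    exact abs_le.mp (hM ↑w (fun h => hw (ZeroMemClass.coe_eq_zero.mp h)))
  have hSne : ∀ W : Submodule ℂ V, finrank ℂ ↥W ≠ 0 →
      Set.Nonempty {s : ℝ | ∃ w : V, w ∈ W ∧ w ≠ 0 ∧ s = F w} := by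
    intro W hW
    have hWbot : W ≠ ⊥ := by rintro rfl; simp [finrank_bot] at hW
    obtain ⟨w, hwW, hw0⟩ := Submodule.exists_mem_ne_zero_of_ne_bot hWbot
    exact ⟨F w, w, hwW, hw0, rfl⟩
  have hSEne : ∀ W : Submodule ℂ ↥E, finrank ℂ ↥W ≠ 0 →
      Set.Nonempty {s : ℝ | ∃ w : ↥E, w ∈ W ∧ w ≠ 0 ∧ s = F ↑w} := by
    intro W hW
    have hWbot : W ≠ ⊥ := by rintro rfl; simp [finrank_bot] at hW
    obtain ⟨w, hwW, hw0⟩ := Submodule.exists_mem_ne_zero_of_ne_bot hWbot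
    exact ⟨F ↑w, w, hwW, hw0, rfl⟩
  -- outer sets are bounded above by M (for nonzero dimension)
  have hRbdd : ∀ j : ℕ, j ≠ 0 → ∀ r ∈ {r : ℝ | ∃ W : Submodule ℂ V, finrank ℂ ↥W = j ∧
      r = sInf {s : ℝ | ∃ w : V, w ∈ W ∧ w ≠ 0 ∧ s = F w}}, r ≤ M := by
    rintro j hj r ⟨W, hW, rfl⟩
    exact (sInf_mem_Icc_of_subset (hSne W (by rw [hW]; exact hj)) (hSsub W)).2
  have hREbdd : ∀ j : ℕ, j ≠ 0 → ∀ r ∈ {r : ℝ | ∃ W : Submodule ℂ ↥E, finrank ℂ ↥W = j ∧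
      r = sInf {s : ℝ | ∃ w : ↥E, w ∈ W ∧ w ≠ 0 ∧ s = F ↑w}}, r ≤ M := by
    rintro j hj r ⟨W, hW, rfl⟩
    exact (sInf_mem_Icc_of_subset (hSEne W (by rw [hW]; exact hj)) (hSEsub W)).2
  -- nonemptiness of the outer sets
  have hREne : Set.Nonempty {r : ℝ | ∃ W : Submodule ℂ ↥E, finrank ℂ ↥W = i ∧
      r = sInf {s : ℝ | ∃ w : ↥E, w ∈ W ∧ w ≠ 0 ∧ s = F ↑w}} := by
    obtain ⟨W, hW⟩ := exists_submodule_finrank_eq_aux (V := ↥E) i (hdimE ▸ hie)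
    exact ⟨_, W, hW, rfl⟩
  constructor
  · -- restricted ≤ full
    refine csSup_le_csSup ⟨M, fun r hr => hRbdd i (by omega) r hr⟩ hREne ?_
    rintro r ⟨W', hW', rfl⟩
    refine ⟨W'.map E.subtype, by rw [Submodule.finrank_map_subtype_eq]; exact hW', ?_⟩
    congr 1
    ext s
    constructor
    · rintro ⟨w, hw, hwne, rfl⟩
      exact ⟨↑w, Submodule.mem_map_of_mem hw,
        fun h => hwne (ZeroMemClass.coe_eq_zero.mp h), rfl⟩
    · rintro ⟨u, hu, hune, rfl⟩
      obtain ⟨w, hwW', rfl⟩ := Submodule.mem_map.mp hu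
      exact ⟨w, hwW', fun h => hune (by simp [h]), rfl⟩
  · -- full (i+v-e) ≤ restricted
    have hkv : i + v - e ≤ v := by omega
    have hRkne : Set.Nonempty {r : ℝ | ∃ W : Submodule ℂ V, finrank ℂ ↥W = i + v - e ∧
        r = sInf {s : ℝ | ∃ w : V, w ∈ W ∧ w ≠ 0 ∧ s = F w}} := by
      obtain ⟨W, hW⟩ := exists_submodule_finrank_eq_aux (V := V) (i + v - e) (hdim ▸ hkv)
      exact ⟨_, W, hW, rfl⟩
    refine csSup_le hRkne ?_
    rintro r ⟨W, hWk, rfl⟩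
    have h2 := Submodule.finrank_map_subtype_eq E (W.comap E.subtype)
    rw [Submodule.map_comap_subtype, inf_comm E W] at h2
    have h3 : finrank ℂ ↥(W ⊔ E) + finrank ℂ ↥(W ⊓ E) = finrank ℂ ↥W + finrank ℂ ↥E :=
      Submodule.finrank_sup_add_finrank_inf_eq W E
    have h4 : finrank ℂ ↥(W ⊔ E) ≤ v := hdim ▸ (W ⊔ E).finrank_le
    have h3' : finrank ℂ ↥(W ⊔ E) + finrank ℂ ↥(W ⊓ E) = (i + v - e) + e := by
      rw [h3, hWk, hdimE]
    have hWE : i ≤ finrank ℂ ↥(W.comap E.subtype) := by omega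
    obtain ⟨U', hU'le, hU'rank⟩ :=
      exists_le_submodule_finrank_eq (V := ↥E) (W.comap E.subtype) i hWE
    have hsub : {s : ℝ | ∃ w : ↥E, w ∈ U' ∧ w ≠ 0 ∧ s = F ↑w} ⊆
        {s : ℝ | ∃ w : V, w ∈ W ∧ w ≠ 0 ∧ s = F w} := by
      rintro s ⟨w, hw, hwne, rfl⟩
      exact ⟨↑w, Submodule.mem_comap.mp (hU'le hw),
        fun h => hwne (ZeroMemClass.coe_eq_zero.mp h), rfl⟩
    have hle1 : sInf {s : ℝ | ∃ w : V, w ∈ W ∧ w ≠ 0 ∧ s = F w} ≤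
        sInf {s : ℝ | ∃ w : ↥E, w ∈ U' ∧ w ≠ 0 ∧ s = F ↑w} :=
      csInf_le_csInf ⟨-M, fun x hx => (hSsub W hx).1⟩
        (hSEne U' (by rw [hU'rank]; omega)) hsub
    exact hle1.trans (le_csSup ⟨M, fun r hr => hREbdd i (by omega) r hr⟩
      ⟨U', hU'rank, rfl⟩)

/-- Interlacing of the logarithmic relative spectra under restriction to a subspace:
`λ_i(N₀,N₁) ≥ λ_i(N₀|_E,N₁|_E) ≥ λ_{i+v-e}(N₀,N₁)`. -/
theorem logSpec_restrict_interlace {V : Type*} [AddCommGroup V] [Module ℂ V]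
    [FiniteDimensional ℂ V] (v e : ℕ) (hv : 1 ≤ v) (hdim : Module.finrank ℂ V = v)
    (E : Submodule ℂ V) (he : 1 ≤ e) (hdimE : Module.finrank ℂ ↥E = e)
    (N₀ N₁ : V → ℝ) (h₀ : IsCNorm N₀) (h₁ : IsCNorm N₁)
    (i : ℕ) (hi : 1 ≤ i) (hie : i ≤ e) :
    logSpec (fun w : ↥E => N₀ ↑w) (fun w : ↥E => N₁ ↑w) i ≤ logSpec N₀ N₁ i ∧
      logSpec N₀ N₁ (i + v - e) ≤ logSpec (fun w : ↥E => N₀ ↑w) (fun w : ↥E => N₁ ↑w) i := by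
  obtain ⟨M, hM⟩ := isCNorm_log_bound h₀ h₁
  exact interlace_general (fun w => Real.log (N₁ w / N₀ w)) M hM E v e i hdim hdimE hi hie
end

section
/- Let R = ⊕_{k≥0} R_k be a graded complex algebra with each R_k finite-dimensional, and let N₀ = (N_{k,0}) and N₁ = (N_{k,1}) be two graded norms on R that are submultiplicative, i.e. ‖f·g‖_{k+l,i} ≤ ‖f‖_{k,i}·‖g‖_{l,i} for all f ∈ R_k, g ∈ R_l, i = 0,1. Then for every t ∈ (0,1), the graded norm N_t = (N_{k,t}), where N_{k,t} is the complex interpolation norm between N_{k,0} and N_{k,1} at parameter t, is submultiplicative. -/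
open scoped BigOperators

/-- The complex interpolation norm at parameter `t ∈ (0,1)` between two norms `N₀`, `N₁`
on a finite-dimensional complex normed space `W`. -/
noncomputable def interpNorm {W : Type*} [NormedAddCommGroup W] [NormedSpace ℂ W]
    (N₀ N₁ : W → ℝ) (t : ℝ) (w : W) : ℝ :=
  sInf {r : ℝ | ∃ f : ℂ → W,
      ContinuousOn f {z : ℂ | 0 ≤ z.re ∧ z.re ≤ 1} ∧
      DifferentiableOn ℂ f {z : ℂ | 0 < z.re ∧ z.re < 1} ∧
      BddAbove (Set.range fun y : ℝ => N₀ (f (Complex.I * y))) ∧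
      BddAbove (Set.range fun y : ℝ => N₁ (f (1 + Complex.I * y))) ∧
      f (t : ℂ) = w ∧
      r = max (⨆ y : ℝ, N₀ (f (Complex.I * y))) (⨆ y : ℝ, N₁ (f (1 + Complex.I * y)))}

section Aux

variable {W : Type*} [NormedAddCommGroup W] [NormedSpace ℂ W]

/-- The set of admissible values whose infimum defines `interpNorm`. -/
def interpSet (N₀ N₁ : W → ℝ) (t : ℝ) (w : W) : Set ℝ :=
  {r : ℝ | ∃ f : ℂ → W,
      ContinuousOn f {z : ℂ | 0 ≤ z.re ∧ z.re ≤ 1} ∧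
      DifferentiableOn ℂ f {z : ℂ | 0 < z.re ∧ z.re < 1} ∧
      BddAbove (Set.range fun y : ℝ => N₀ (f (Complex.I * y))) ∧
      BddAbove (Set.range fun y : ℝ => N₁ (f (1 + Complex.I * y))) ∧
      f (t : ℂ) = w ∧
      r = max (⨆ y : ℝ, N₀ (f (Complex.I * y))) (⨆ y : ℝ, N₁ (f (1 + Complex.I * y)))}

lemma interpNorm_eq_sInf (N₀ N₁ : W → ℝ) (t : ℝ) (w : W) :
    interpNorm N₀ N₁ t w = sInf (interpSet N₀ N₁ t w) := rfl

lemma interpSet_nonempty (N₀ N₁ : W → ℝ) (t : ℝ) (w : W) :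
    (interpSet N₀ N₁ t w).Nonempty := by
  refine ⟨_, fun _ => w, continuousOn_const, differentiableOn_const _, ?_, ?_, rfl, rfl⟩
  · exact ⟨N₀ w, by rintro x ⟨y, rfl⟩; exact le_rfl⟩
  · exact ⟨N₁ w, by rintro x ⟨y, rfl⟩; exact le_rfl⟩

lemma interpSet_nonneg {N₀ N₁ : W → ℝ} (h0 : ∀ w, 0 ≤ N₀ w) {t : ℝ} {w : W}
    {r : ℝ} (hr : r ∈ interpSet N₀ N₁ t w) : 0 ≤ r := by
  obtain ⟨f, -, -, -, -, -, rfl⟩ := hr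
  exact le_trans (Real.iSup_nonneg fun y => h0 _) (le_max_left _ _)

lemma interpSet_bddBelow {N₀ N₁ : W → ℝ} (h0 : ∀ w, 0 ≤ N₀ w) (t : ℝ) (w : W) :
    BddBelow (interpSet N₀ N₁ t w) :=
  ⟨0, fun _ hr => interpSet_nonneg h0 hr⟩

lemma interpNorm_le_of_mem {N₀ N₁ : W → ℝ} (h0 : ∀ w, 0 ≤ N₀ w) {t : ℝ} {w : W}
    {r : ℝ} (hr : r ∈ interpSet N₀ N₁ t w) : interpNorm N₀ N₁ t w ≤ r :=
  csInf_le (interpSet_bddBelow h0 t w) hr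

end Aux

private lemma mul_sInf_aux {B : Set ℝ} {c r : ℝ} (hB : B.Nonempty) (hr : 0 ≤ r)
    (h : ∀ s ∈ B, c ≤ r * s) : c ≤ r * sInf B := by
  rcases hr.eq_or_lt with rfl | hr
  · obtain ⟨s, hs⟩ := hB
    simpa using h s hs
  · have h2 : c / r ≤ sInf B :=
      le_csInf hB fun s hs => (div_le_iff₀ hr).mpr (by rw [mul_comm]; exact h s hs)
    calc c = r * (c / r) := by field_simp
    _ ≤ r * sInf B := mul_le_mul_of_nonneg_left h2 hr.le

section Bil

variable {W₁ W₂ W₃ : Type*} [NormedAddCommGroup W₁] [NormedSpace ℂ W₁]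
  [NormedAddCommGroup W₂] [NormedSpace ℂ W₂] [NormedAddCommGroup W₃] [NormedSpace ℂ W₃]
  [FiniteDimensional ℂ W₁] [FiniteDimensional ℂ W₂]

/-- A bilinear map out of finite-dimensional spaces, as a continuous bilinear map. -/
noncomputable def bilCLM (B : W₁ →ₗ[ℂ] W₂ →ₗ[ℂ] W₃) : W₁ →L[ℂ] W₂ →L[ℂ] W₃ :=
  LinearMap.toContinuousLinearMap
  { toFun := fun x => LinearMap.toContinuousLinearMap (B x)
    map_add' := by intro x y; ext z; simp
    map_smul' := by intro c x; ext z; simp }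

lemma bil_bdd (B : W₁ →ₗ[ℂ] W₂ →ₗ[ℂ] W₃) :
    IsBoundedBilinearMap ℂ fun p : W₁ × W₂ => B p.1 p.2 :=
  (bilCLM B).isBoundedBilinearMap

/-- Key step: for admissible values `r`, `s` for `w₁`, `w₂`, the interpolation norm of
`B w₁ w₂` is at most `r * s`, given submultiplicativity of the boundary norms. -/
lemma interpNorm_bil_le {M₀ M₁ : W₁ → ℝ} {P₀ P₁ : W₂ → ℝ} {Q₀ Q₁ : W₃ → ℝ}
    (hM₀ : ∀ w, 0 ≤ M₀ w) (hM₁ : ∀ w, 0 ≤ M₁ w)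
    (hP₀ : ∀ w, 0 ≤ P₀ w) (hP₁ : ∀ w, 0 ≤ P₁ w)
    (hQ₀ : ∀ w, 0 ≤ Q₀ w)
    (B : W₁ →ₗ[ℂ] W₂ →ₗ[ℂ] W₃)
    (hs₀ : ∀ x y, Q₀ (B x y) ≤ M₀ x * P₀ y)
    (hs₁ : ∀ x y, Q₁ (B x y) ≤ M₁ x * P₁ y)
    {t : ℝ} {w₁ : W₁} {w₂ : W₂} {r s : ℝ}
    (hr : r ∈ interpSet M₀ M₁ t w₁) (hs : s ∈ interpSet P₀ P₁ t w₂) :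
    interpNorm Q₀ Q₁ t (B w₁ w₂) ≤ r * s := by
  obtain ⟨F, hFc, hFd, hFb0, hFb1, hFt, rfl⟩ := hr
  obtain ⟨G, hGc, hGd, hGb0, hGb1, hGt, rfl⟩ := hs
  set sF0 : ℝ := ⨆ y : ℝ, M₀ (F (Complex.I * y))
  set sF1 : ℝ := ⨆ y : ℝ, M₁ (F (1 + Complex.I * y))
  set sG0 : ℝ := ⨆ y : ℝ, P₀ (G (Complex.I * y))
  set sG1 : ℝ := ⨆ y : ℝ, P₁ (G (1 + Complex.I * y))
  have hsF0 : 0 ≤ sF0 := Real.iSup_nonneg fun y => hM₀ _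
  have hsF1 : 0 ≤ sF1 := Real.iSup_nonneg fun y => hM₁ _
  have hsG0 : 0 ≤ sG0 := Real.iSup_nonneg fun y => hP₀ _
  have hsG1 : 0 ≤ sG1 := Real.iSup_nonneg fun y => hP₁ _
  set H : ℂ → W₃ := fun z => B (F z) (G z) with hH
  have hbd0 : ∀ y : ℝ, Q₀ (H (Complex.I * y)) ≤ sF0 * sG0 := by
    intro y
    refine (hs₀ _ _).trans (mul_le_mul ?_ ?_ (hP₀ _) hsF0)
    · exact le_ciSup hFb0 y
    · exact le_ciSup hGb0 y
  have hbd1 : ∀ y : ℝ, Q₁ (H (1 + Complex.I * y)) ≤ sF1 * sG1 := by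
    intro y
    refine (hs₁ _ _).trans (mul_le_mul ?_ ?_ (hP₁ _) hsF1)
    · exact le_ciSup hFb1 y
    · exact le_ciSup hGb1 y
  have hmem : max (⨆ y : ℝ, Q₀ (H (Complex.I * y))) (⨆ y : ℝ, Q₁ (H (1 + Complex.I * y)))
      ∈ interpSet Q₀ Q₁ t (B w₁ w₂) := by
    refine ⟨H, ?_, ?_, ?_, ?_, ?_, rfl⟩
    · exact (bil_bdd B).continuous.comp_continuousOn (hFc.prodMk hGc)
    · exact (bil_bdd B).differentiable.comp_differentiableOn (hFd.prodMk hGd)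
    · exact ⟨sF0 * sG0, by rintro x ⟨y, rfl⟩; exact hbd0 y⟩
    · exact ⟨sF1 * sG1, by rintro x ⟨y, rfl⟩; exact hbd1 y⟩
    · simp [hH, hFt, hGt]
  refine (interpNorm_le_of_mem hQ₀ hmem).trans ?_
  have h1 : (⨆ y : ℝ, Q₀ (H (Complex.I * y))) ≤ sF0 * sG0 := ciSup_le hbd0
  have h2 : (⨆ y : ℝ, Q₁ (H (1 + Complex.I * y))) ≤ sF1 * sG1 := ciSup_le hbd1
  have e0 : sF0 * sG0 ≤ max sF0 sF1 * max sG0 sG1 :=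
    mul_le_mul (le_max_left _ _) (le_max_left _ _) hsG0 (le_trans hsF0 (le_max_left _ _))
  have e1 : sF1 * sG1 ≤ max sF0 sF1 * max sG0 sG1 :=
    mul_le_mul (le_max_right _ _) (le_max_right _ _) hsG1 (le_trans hsF0 (le_max_left _ _))
  exact max_le (h1.trans e0) (h2.trans e1)

end Bil

/-- Complex interpolation of two submultiplicative graded norms on a graded algebra
`R = ⊕ R_k` (with multiplication given by the bilinear maps `mul k l`) is submultiplicative. -/
theorem interpNorm_submultiplicative (R : ℕ → Type) [∀ k, NormedAddCommGroup (R k)]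
    [∀ k, NormedSpace ℂ (R k)] [∀ k, FiniteDimensional ℂ (R k)]
    (mul : ∀ k l, R k →ₗ[ℂ] R l →ₗ[ℂ] R (k + l))
    (N₀ N₁ : ∀ k, R k → ℝ)
    (hn₀ : ∀ k, IsCNorm (N₀ k)) (hn₁ : ∀ k, IsCNorm (N₁ k))
    (hsub₀ : ∀ k l (f : R k) (g : R l), N₀ (k + l) (mul k l f g) ≤ N₀ k f * N₀ l g)
    (hsub₁ : ∀ k l (f : R k) (g : R l), N₁ (k + l) (mul k l f g) ≤ N₁ k f * N₁ l g)
    (t : ℝ) (ht0 : 0 < t) (ht1 : t < 1) :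
    ∀ k l (f : R k) (g : R l),
      interpNorm (N₀ (k + l)) (N₁ (k + l)) t (mul k l f g) ≤
        interpNorm (N₀ k) (N₁ k) t f * interpNorm (N₀ l) (N₁ l) t g := by
  intro k l f g
  have key : ∀ r ∈ interpSet (N₀ k) (N₁ k) t f, ∀ s ∈ interpSet (N₀ l) (N₁ l) t g,
      interpNorm (N₀ (k + l)) (N₁ (k + l)) t (mul k l f g) ≤ r * s := fun r hr s hs =>
    interpNorm_bil_le (hn₀ k).nonneg (hn₁ k).nonneg (hn₀ l).nonneg (hn₁ l).nonneg
      (hn₀ (k + l)).nonneg (mul k l) (hsub₀ k l) (hsub₁ k l) hr hs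
  have step1 : ∀ r ∈ interpSet (N₀ k) (N₁ k) t f,
      interpNorm (N₀ (k + l)) (N₁ (k + l)) t (mul k l f g) ≤
        r * interpNorm (N₀ l) (N₁ l) t g := by
    intro r hr
    rw [interpNorm_eq_sInf]
    exact mul_sInf_aux (interpSet_nonempty _ _ _ _) (interpSet_nonneg (hn₀ k).nonneg hr)
      (key r hr)
  have hb : 0 ≤ interpNorm (N₀ l) (N₁ l) t g := by
    rw [interpNorm_eq_sInf]
    exact Real.sInf_nonneg fun x hx => interpSet_nonneg (hn₀ l).nonneg hx
  rw [mul_comm, interpNorm_eq_sInf (N₀ k)]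
  exact mul_sInf_aux (interpSet_nonempty _ _ _ _) hb
    (fun r hr => by rw [mul_comm]; exact step1 r hr)
end

section
/- Let V be a complex vector space of dimension v with a decreasing left-continuous ℝ-filtration F, let N₀ be a norm and H₀ a Hermitian norm on V. For t ≥ 0, define N_t by ‖f‖_{N_t} = inf{∑_i e^{−t·μ_i}·‖f_i‖_{N₀} : f = ∑_i f_i, f_i ∈ F^{μ_i}V}, and define H_t from H₀ via an adapted orthonormal basis s_i ∈ F^{e(i)}V by declaring (e^{t·e(i)}s_i)_i orthonormal. Then d_{∞}(H_t, N_t) ≤ d_{∞}(H₀, N₀) + log v for all t ≥ 0, where d_∞(N,N') is the minimal C ≥ 0 such that e^{−C}·N ≤ N' ≤ e^{C}·N. -/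
open scoped BigOperators

/-- The `j`-th jumping number of a decreasing filtration `F`:
`e(j) = sup {t : dim F^t V ≥ j}`. -/
noncomputable def jumpNum {V : Type*} [AddCommGroup V] [Module ℂ V]
    (F : ℝ → Submodule ℂ V) (j : ℕ) : ℝ :=
  sSup {t : ℝ | j ≤ Module.finrank ℂ ↥(F t)}

/-- The ray of norms emanating from a norm `N₀` and associated with a filtration `F`:
`‖f‖_{N_t} = inf {∑ e^{-t μ_i} ‖f_i‖_{N₀} : f = ∑ f_i, f_i ∈ F^{μ_i} V}`. -/
noncomputable def rayNorm {V : Type*} [AddCommGroup V] [Module ℂ V]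
    (F : ℝ → Submodule ℂ V) (N₀ : V → ℝ) (t : ℝ) (f : V) : ℝ :=
  sInf {r : ℝ | ∃ (n : ℕ) (μ : Fin n → ℝ) (g : Fin n → V),
      (∀ i, g i ∈ F (μ i)) ∧ f = ∑ i, g i ∧ r = ∑ i, Real.exp (-t * μ i) * N₀ (g i)}

/-- The Hermitian norm `H_t` for which the basis `(e^{t e(i)} s i)` is orthonormal. -/
noncomputable def rayHerm {V : Type*} [NormedAddCommGroup V] [InnerProductSpace ℂ V]
    {v : ℕ} (s : Fin v → V) (e : Fin v → ℝ) (t : ℝ) (w : V) : ℝ :=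
  Real.sqrt (∑ i, Real.exp (-2 * t * e i) * ‖(inner ℂ (s i) w : ℂ)‖ ^ 2)

/-- The distance `d_∞(N,N')`: the least `C ≥ 0` with `e^{-C} N ≤ N' ≤ e^{C} N`. -/
noncomputable def dInfty {V : Type*} (N N' : V → ℝ) : ℝ :=
  sInf {C : ℝ | 0 ≤ C ∧ ∀ w, Real.exp (-C) * N w ≤ N' w ∧ N' w ≤ Real.exp C * N w}

/-! ### Auxiliary lemmas -/

/-- Type synonym used to put the norm `N` on `V`. -/
private def NormSyn (V : Type*) : Type _ := V

/-- Any `IsCNorm` norm on a finite-dimensional space is equivalent to the given norm. -/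
private lemma IsCNorm.exists_bounds {V : Type*} [NormedAddCommGroup V] [InnerProductSpace ℂ V]
    [FiniteDimensional ℂ V] {N : V → ℝ} (h : IsCNorm N) :
    ∃ C : ℝ, 1 ≤ C ∧ ∀ w, N w ≤ C * ‖w‖ ∧ ‖w‖ ≤ C * N w := by
  letI : AddCommGroup (NormSyn V) := inferInstanceAs (AddCommGroup V)
  letI : Module ℂ (NormSyn V) := inferInstanceAs (Module ℂ V)
  have hzero : N 0 = 0 := by
    have := h.smul 0 0
    simpa using this
  let gn : AddGroupNorm (NormSyn V) :=
    { toFun := fun x => N (show V from x)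
      map_zero' := hzero
      add_le' := h.triangle
      neg' := fun x => by
        have := h.smul (-1) (show V from x)
        rw [neg_one_smul, norm_neg, norm_one, one_mul] at this
        exact this
      eq_zero_of_map_eq_zero' := fun x hx => h.eq_zero _ hx }
  letI : NormedAddCommGroup (NormSyn V) := gn.toNormedAddCommGroup
  letI : NormedSpace ℂ (NormSyn V) := ⟨fun c x => le_of_eq (h.smul c (show V from x))⟩
  letI : FiniteDimensional ℂ (NormSyn V) := inferInstanceAs (FiniteDimensional ℂ V)
  let f : V →ₗ[ℂ] NormSyn V :=
    { toFun := fun x => x, map_add' := fun _ _ => rfl, map_smul' := fun _ _ => rfl }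
  let g : NormSyn V →ₗ[ℂ] V :=
    { toFun := fun x => x, map_add' := fun _ _ => rfl, map_smul' := fun _ _ => rfl }
  let f' : V →L[ℂ] NormSyn V := LinearMap.toContinuousLinearMap f
  let g' : NormSyn V →L[ℂ] V := LinearMap.toContinuousLinearMap g
  set C₁ := ‖f'‖ with hC₁def
  set C₂ := ‖g'‖ with hC₂def
  have hC₁ : ∀ x : V, ‖f' x‖ ≤ C₁ * ‖x‖ := fun x => f'.le_opNorm x
  have hC₂ : ∀ x : NormSyn V, ‖g' x‖ ≤ C₂ * ‖x‖ := fun x => g'.le_opNorm x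
  refine ⟨max 1 (max C₁ C₂), le_max_left _ _, fun w => ⟨?_, ?_⟩⟩
  · have h1 : N w ≤ C₁ * ‖w‖ := hC₁ w
    have hle : C₁ ≤ max 1 (max C₁ C₂) := le_trans (le_max_left _ _) (le_max_right _ _)
    exact h1.trans (mul_le_mul_of_nonneg_right hle (norm_nonneg w))
  · have h1 : ‖w‖ ≤ C₂ * N w := hC₂ w
    have hle : C₂ ≤ max 1 (max C₁ C₂) := le_trans (le_max_right _ _) (le_max_right _ _)
    exact h1.trans (mul_le_mul_of_nonneg_right hle (h.nonneg w))

private lemma dInfty_spec {V : Type*} (N N' : V → ℝ) (hN : ∀ w, 0 ≤ N w)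
    (hne : ∃ C : ℝ, 0 ≤ C ∧ ∀ w, Real.exp (-C) * N w ≤ N' w ∧ N' w ≤ Real.exp C * N w) :
    0 ≤ dInfty N N' ∧
      ∀ w, Real.exp (-(dInfty N N')) * N w ≤ N' w ∧ N' w ≤ Real.exp (dInfty N N') * N w := by
  rw [dInfty]
  set D := {C : ℝ | 0 ≤ C ∧ ∀ w, Real.exp (-C) * N w ≤ N' w ∧ N' w ≤ Real.exp C * N w} with hD
  have hDne : D.Nonempty := hne
  have hd0 : 0 ≤ sInf D := le_csInf hDne fun C hC => hC.1
  have hmem : ∀ C, sInf D < C → C ∈ D := by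
    intro C hC
    obtain ⟨C', hC', hlt⟩ := exists_lt_of_csInf_lt hDne hC
    refine ⟨hC'.1.trans hlt.le, fun w => ⟨?_, ?_⟩⟩
    · exact le_trans (mul_le_mul_of_nonneg_right
        (Real.exp_le_exp.2 (by linarith)) (hN w)) (hC'.2 w).1
    · exact le_trans (hC'.2 w).2 (mul_le_mul_of_nonneg_right
        (Real.exp_le_exp.2 hlt.le) (hN w))
  refine ⟨hd0, fun w => ⟨?_, ?_⟩⟩
  · have htd : Filter.Tendsto (fun C : ℝ => Real.exp (-C) * N w)
        (nhdsWithin (sInf D) (Set.Ioi (sInf D))) (nhds (Real.exp (-(sInf D)) * N w)) := by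
      apply Filter.Tendsto.mono_left _ nhdsWithin_le_nhds
      exact ((Real.continuous_exp.comp continuous_neg).mul continuous_const).tendsto _
    refine le_of_tendsto htd ?_
    filter_upwards [self_mem_nhdsWithin] with C hC
    exact ((hmem C hC).2 w).1
  · have htd : Filter.Tendsto (fun C : ℝ => Real.exp C * N w)
        (nhdsWithin (sInf D) (Set.Ioi (sInf D))) (nhds (Real.exp (sInf D) * N w)) := by
      apply Filter.Tendsto.mono_left _ nhdsWithin_le_nhds
      exact (Real.continuous_exp.mul continuous_const).tendsto _
    refine ge_of_tendsto htd ?_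
    filter_upwards [self_mem_nhdsWithin] with C hC
    exact ((hmem C hC).2 w).2

/-- Comparison of the two ray constructions associated with a filtration:
`d_∞(H_t, N_t) ≤ d_∞(H₀, N₀) + log v`. -/
theorem dInfty_rayHerm_rayNorm_le {V : Type*} [NormedAddCommGroup V]
    [InnerProductSpace ℂ V] [FiniteDimensional ℂ V]
    (v : ℕ) (hv : 1 ≤ v) (hdim : Module.finrank ℂ V = v)
    (F : ℝ → Submodule ℂ V)
    (hdec : ∀ t s' : ℝ, s' < t → F t ≤ F s')
    (hlc : ∀ t : ℝ, ∃ ε > 0, ∀ u : ℝ, t - ε < u → u ≤ t → F u = F t)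
    (hbot : ∃ T : ℝ, ∀ t ≥ T, F t = ⊥) (htop : ∃ T : ℝ, ∀ t ≤ T, F t = ⊤)
    (N₀ : V → ℝ) (hN₀ : IsCNorm N₀)
    (s : Fin v → V) (hon : Orthonormal ℂ s)
    (hadapt : ∀ i : Fin v, s i ∈ F (jumpNum F (i.1 + 1)))
    (t : ℝ) (ht : 0 ≤ t) :
    dInfty (rayHerm s (fun i => jumpNum F (i.1 + 1)) t) (rayNorm F N₀ t) ≤
      dInfty (fun w : V => ‖w‖) N₀ + Real.log v := by
  classical
  -- Step 1: characterization of jumping numbers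
  have hjump : ∀ (μ : ℝ) (j : ℕ), 1 ≤ j → j ≤ v →
      (μ ≤ jumpNum F j ↔ j ≤ Module.finrank ℂ (F μ)) := by
    intro μ j hj1 hjv
    obtain ⟨T₁, hT₁⟩ := hbot
    obtain ⟨T₀, hT₀⟩ := htop
    rw [jumpNum]
    set S : Set ℝ := {u : ℝ | j ≤ Module.finrank ℂ (F u)} with hS
    have hSne : S.Nonempty := by
      refine ⟨T₀, ?_⟩
      have hfr : Module.finrank ℂ (F T₀) = v := by
        rw [hT₀ T₀ le_rfl]
        rw [finrank_top, hdim]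
      show j ≤ Module.finrank ℂ (F T₀)
      omega
    have hSbdd : BddAbove S := by
      refine ⟨T₁, fun u hu => ?_⟩
      by_contra hcon
      push_neg at hcon
      have hb : Module.finrank ℂ (F u) = 0 := by
        rw [hT₁ u hcon.le]
        exact finrank_bot ℂ V
      have hu' : j ≤ Module.finrank ℂ (F u) := hu
      omega
    have hdc : ∀ u u' : ℝ, u' ≤ u → u ∈ S → u' ∈ S := by
      intro u u' hle hu
      rcases eq_or_lt_of_le hle with rfl | hlt
      · exact hu
      · exact le_trans hu (Submodule.finrank_mono (hdec u u' hlt))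
    constructor
    · intro hμ
      by_contra hnot
      have hub : ∀ u ∈ S, u < μ := by
        intro u hu
        by_contra hge; push_neg at hge
        exact hnot (hdc u μ hge hu)
      have hsup : sSup S = μ :=
        le_antisymm (csSup_le hSne fun u hu => (hub u hu).le) hμ
      obtain ⟨ε, hε, hεP⟩ := hlc μ
      obtain ⟨u, hu, hlt⟩ := exists_lt_of_lt_csSup hSne
        (show μ - ε < sSup S by rw [hsup]; linarith)
      have huμ : u < μ := hub u hu
      have hFu : F u = F μ := hεP u hlt huμ.le
      exact hnot (by rwa [hS, Set.mem_setOf_eq, hFu] at hu)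
    · intro hμ
      exact le_csSup hSbdd hμ
  -- Step 2: vanishing of inner products
  have hvanish : ∀ (μ : ℝ) (g : V), g ∈ F μ → ∀ i : Fin v, jumpNum F (i.1 + 1) < μ →
      (inner ℂ (s i) g : ℂ) = 0 := by
    intro μ g hg i hi
    set d := Module.finrank ℂ (F μ) with hdm
    have hdv : d ≤ v := hdim ▸ Submodule.finrank_le (F μ)
    set T : Finset (Fin v) := Finset.univ.filter (fun j => μ ≤ jumpNum F (j.1 + 1)) with hT
    have hTmem : ∀ j : Fin v, j ∈ T ↔ (j : ℕ) < d := by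
      intro j
      simp only [hT, Finset.mem_filter, Finset.mem_univ, true_and]
      rw [hjump μ (j.1 + 1) (by omega) (by omega)]
      omega
    have hTcard : T.card = d := by
      apply Finset.card_eq_of_bijective (fun k hk => (⟨k, lt_of_lt_of_le hk hdv⟩ : Fin v))
      · intro a ha
        exact ⟨a.1, (hTmem a).1 ha, rfl⟩
      · intro k hk
        exact (hTmem _).2 hk
      · intro k l hk hl hkl
        exact congrArg Fin.val hkl
    set b : {j // j ∈ T} → V := fun j => s j.1 with hb
    have hbon : Orthonormal ℂ b := hon.comp _ Subtype.val_injective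
    have hbsub : ∀ j : {j // j ∈ T}, b j ∈ F μ := by
      intro j
      have hje : μ ≤ jumpNum F (j.1.1 + 1) := (Finset.mem_filter.1 j.2).2
      rcases eq_or_lt_of_le hje with heq | hlt'
      · rw [heq]; exact hadapt j.1
      · exact hdec _ _ hlt' (hadapt j.1)
    have hspan_le : Submodule.span ℂ (Set.range b) ≤ F μ :=
      Submodule.span_le.2 (by rintro x ⟨j, rfl⟩; exact hbsub j)
    have hfr : Module.finrank ℂ (Submodule.span ℂ (Set.range b)) = d := by
      rw [finrank_span_eq_card hbon.linearIndependent, Fintype.card_coe, hTcard]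
    have hspan : Submodule.span ℂ (Set.range b) = F μ :=
      Submodule.eq_of_le_of_finrank_le hspan_le (by rw [hfr])
    have hg' : g ∈ Submodule.span ℂ (Set.range b) := hspan ▸ hg
    refine Submodule.span_induction (p := fun x _ => (inner ℂ (s i) x : ℂ) = 0)
      ?_ ?_ ?_ ?_ hg'
    · rintro x ⟨j, rfl⟩
      have hne : i ≠ j.1 := by
        rintro rfl
        have := (Finset.mem_filter.1 j.2).2
        exact absurd this (not_le.2 hi)
      exact hon.2 hne
    · exact inner_zero_right _
    · intro x y _ _ hx hy
      rw [inner_add_right, hx, hy, add_zero]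
    · intro a x _ hx
      rw [inner_smul_right, hx, mul_zero]
  -- notation
  set e : Fin v → ℝ := fun i => jumpNum F (i.1 + 1) with he
  -- Step 3: rayHerm as the norm of a linear map into Euclidean space
  set Tmap : V →ₗ[ℂ] EuclideanSpace ℂ (Fin v) :=
    { toFun := fun w => WithLp.toLp 2 (fun i => (Real.exp (-t * e i) : ℂ) * inner ℂ (s i) w)
      map_add' := by
        intro x y
        ext i
        show (Real.exp (-t * e i) : ℂ) * (inner ℂ (s i) (x + y) : ℂ)
            = (Real.exp (-t * e i) : ℂ) * inner ℂ (s i) x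
              + (Real.exp (-t * e i) : ℂ) * inner ℂ (s i) y
        rw [inner_add_right]
        ring
      map_smul' := by
        intro c x
        ext i
        show (Real.exp (-t * e i) : ℂ) * (inner ℂ (s i) (c • x) : ℂ)
            = c * ((Real.exp (-t * e i) : ℂ) * inner ℂ (s i) x)
        rw [inner_smul_right]
        ring } with hTmap
  have hsq : ∀ x : ℝ, Real.exp (-2 * t * x) = Real.exp (-t * x) ^ 2 := by
    intro x
    rw [sq, ← Real.exp_add]
    ring_nf
  have hHt : ∀ w, rayHerm s e t w = ‖Tmap w‖ := by
    intro w
    rw [rayHerm, EuclideanSpace.norm_eq]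
    congr 1
    apply Finset.sum_congr rfl
    intro i _
    have h1 : ‖Tmap w i‖ = Real.exp (-t * e i) * ‖(inner ℂ (s i) w : ℂ)‖ := by
      show ‖(Real.exp (-t * e i) : ℂ) * inner ℂ (s i) w‖ = _
      rw [norm_mul, Complex.norm_real, Real.norm_eq_abs, abs_of_pos (Real.exp_pos _)]
    rw [h1, mul_pow, hsq]
  -- Step 4: decay of rayHerm on F μ
  have hHtnn : ∀ w, 0 ≤ rayHerm s e t w := fun w => Real.sqrt_nonneg _
  have hdecay : ∀ (μ : ℝ) (g : V), g ∈ F μ →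
      rayHerm s e t g ≤ Real.exp (-t * μ) * ‖g‖ := by
    intro μ g hg
    rw [rayHerm]
    have h2 : ∑ i, ‖(inner ℂ (s i) g : ℂ)‖ ^ 2 ≤ ‖g‖ ^ 2 := by
      simpa using
        Orthonormal.sum_inner_products_le (s := Finset.univ) g hon
    have h1 : ∑ i, Real.exp (-2 * t * e i) * ‖(inner ℂ (s i) g : ℂ)‖ ^ 2
        ≤ Real.exp (-2 * t * μ) * ∑ i, ‖(inner ℂ (s i) g : ℂ)‖ ^ 2 := by
      rw [Finset.mul_sum]
      apply Finset.sum_le_sum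
      intro i _
      by_cases hc : μ ≤ e i
      · apply mul_le_mul_of_nonneg_right _ (by positivity)
        apply Real.exp_le_exp.2
        nlinarith
      · push_neg at hc
        rw [hvanish μ g hg i hc]
        simp [le_of_lt (Real.exp_pos _)]
    calc Real.sqrt (∑ i, Real.exp (-2 * t * e i) * ‖(inner ℂ (s i) g : ℂ)‖ ^ 2)
        ≤ Real.sqrt (Real.exp (-2 * t * μ) * ‖g‖ ^ 2) := by
          apply Real.sqrt_le_sqrt
          calc _ ≤ Real.exp (-2 * t * μ) * ∑ i, ‖(inner ℂ (s i) g : ℂ)‖ ^ 2 := h1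
            _ ≤ _ := mul_le_mul_of_nonneg_left h2 (le_of_lt (Real.exp_pos _))
      _ = Real.exp (-t * μ) * ‖g‖ := by
          rw [hsq, Real.sqrt_mul (sq_nonneg _), Real.sqrt_sq (le_of_lt (Real.exp_pos _)),
            Real.sqrt_sq (norm_nonneg g)]
  -- Step 5: the base distance
  obtain ⟨C, hC1, hC⟩ := hN₀.exists_bounds
  have hCpos : (0 : ℝ) < C := lt_of_lt_of_le one_pos hC1
  have hd0spec := dInfty_spec (fun w : V => ‖w‖) N₀ (fun w => norm_nonneg w)
    ⟨Real.log C, Real.log_nonneg hC1, fun w => by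
      rw [Real.exp_log hCpos, Real.exp_neg, Real.exp_log hCpos]
      constructor
      · rw [inv_mul_le_iff₀ hCpos]
        exact (hC w).2
      · exact (hC w).1⟩
  set d0 := dInfty (fun w : V => ‖w‖) N₀ with hd0def
  obtain ⟨hd0nn, hd0⟩ := hd0spec
  -- Step 6: orthonormal basis expansion
  have hexp : ∀ f : V, ∑ i, (inner ℂ (s i) f : ℂ) • s i = f := by
    intro f
    haveI : Nonempty (Fin v) := ⟨⟨0, by omega⟩⟩
    have hsp : ⊤ ≤ Submodule.span ℂ (Set.range s) := by
      rw [hon.linearIndependent.span_eq_top_of_card_eq_finrank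
        (by simp [hdim])]
    have := (OrthonormalBasis.mk hon hsp).sum_repr f
    simpa [OrthonormalBasis.coe_mk, OrthonormalBasis.repr_apply_apply] using this
  -- Step 7: conclusion
  have hlogv : 0 ≤ Real.log v := Real.log_nonneg (by exact_mod_cast hv)
  rw [dInfty]
  apply csInf_le ⟨0, fun C hC => hC.1⟩
  refine ⟨by positivity, fun f => ⟨?_, ?_⟩⟩
  · -- lower bound: exp(-(d0+log v)) * Ht f ≤ Nt f
    rw [rayNorm]
    apply le_csInf
    · obtain ⟨T₀, hT₀⟩ := htop
      exact ⟨∑ i : Fin 1, Real.exp (-t * T₀) * N₀ f,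
        1, fun _ => T₀, fun _ => f, fun _ => by rw [hT₀ T₀ le_rfl]; trivial, by simp, rfl⟩
    · rintro r ⟨n, μ, g, hgmem, rfl, rfl⟩
      have key : Real.exp (-d0) * rayHerm s e t (∑ j, g j)
          ≤ ∑ j, Real.exp (-t * μ j) * N₀ (g j) := by
        have htr : rayHerm s e t (∑ j, g j) ≤ ∑ j, rayHerm s e t (g j) := by
          rw [hHt, map_sum]
          refine le_trans (norm_sum_le _ _) ?_
          apply Finset.sum_le_sum
          intro j _
          rw [hHt]
        calc Real.exp (-d0) * rayHerm s e t (∑ j, g j)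
            ≤ Real.exp (-d0) * ∑ j, rayHerm s e t (g j) :=
              mul_le_mul_of_nonneg_left htr (le_of_lt (Real.exp_pos _))
          _ = ∑ j, Real.exp (-d0) * rayHerm s e t (g j) := Finset.mul_sum _ _ _
          _ ≤ ∑ j, Real.exp (-t * μ j) * N₀ (g j) := by
              apply Finset.sum_le_sum
              intro j _
              calc Real.exp (-d0) * rayHerm s e t (g j)
                  ≤ Real.exp (-d0) * (Real.exp (-t * μ j) * ‖g j‖) :=
                    mul_le_mul_of_nonneg_left (hdecay (μ j) (g j) (hgmem j))
                      (le_of_lt (Real.exp_pos _))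
                _ = Real.exp (-t * μ j) * (Real.exp (-d0) * ‖g j‖) := by ring
                _ ≤ Real.exp (-t * μ j) * N₀ (g j) :=
                    mul_le_mul_of_nonneg_left ((hd0 (g j)).1) (le_of_lt (Real.exp_pos _))
      refine le_trans ?_ key
      apply mul_le_mul_of_nonneg_right _ (hHtnn _)
      apply Real.exp_le_exp.2
      linarith
  · -- upper bound: Nt f ≤ exp(d0 + log v) * Ht f
    rw [rayNorm]
    have hbdd : BddBelow {r : ℝ | ∃ (n : ℕ) (μ : Fin n → ℝ) (g : Fin n → V),
        (∀ i, g i ∈ F (μ i)) ∧ f = ∑ i, g i ∧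
          r = ∑ i, Real.exp (-t * μ i) * N₀ (g i)} := by
      refine ⟨0, ?_⟩
      rintro r ⟨n, μ, g, _, _, rfl⟩
      apply Finset.sum_nonneg
      intro i _
      exact mul_nonneg (le_of_lt (Real.exp_pos _)) (hN₀.nonneg _)
    have hmem : (∑ i, Real.exp (-t * e i) * N₀ ((inner ℂ (s i) f : ℂ) • s i)) ∈
        {r : ℝ | ∃ (n : ℕ) (μ : Fin n → ℝ) (g : Fin n → V),
          (∀ i, g i ∈ F (μ i)) ∧ f = ∑ i, g i ∧
            r = ∑ i, Real.exp (-t * μ i) * N₀ (g i)} :=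
      ⟨v, e, fun i => (inner ℂ (s i) f : ℂ) • s i,
        fun i => Submodule.smul_mem _ _ (hadapt i), (hexp f).symm, rfl⟩
    refine le_trans (csInf_le hbdd hmem) ?_
    -- now the Cauchy-Schwarz estimate
    set a : Fin v → ℝ := fun i => Real.exp (-t * e i) * ‖(inner ℂ (s i) f : ℂ)‖
      with ha
    have hann : ∀ i, 0 ≤ a i := fun i =>
      mul_nonneg (le_of_lt (Real.exp_pos _)) (norm_nonneg _)
    have step1 : (∑ i, Real.exp (-t * e i) * N₀ ((inner ℂ (s i) f : ℂ) • s i))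
        ≤ Real.exp d0 * ∑ i, a i := by
      rw [Finset.mul_sum]
      apply Finset.sum_le_sum
      intro i _
      rw [hN₀.smul]
      have hNs : N₀ (s i) ≤ Real.exp d0 := by
        have h := (hd0 (s i)).2
        rwa [hon.1 i, mul_one] at h
      calc Real.exp (-t * e i) * (‖(inner ℂ (s i) f : ℂ)‖ * N₀ (s i))
          ≤ Real.exp (-t * e i) * (‖(inner ℂ (s i) f : ℂ)‖ * Real.exp d0) := by
            apply mul_le_mul_of_nonneg_left _ (le_of_lt (Real.exp_pos _))
            exact mul_le_mul_of_nonneg_left hNs (norm_nonneg _)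
        _ = Real.exp d0 * a i := by rw [ha]; ring
    have step2 : ∑ i, a i ≤ (v : ℝ) * rayHerm s e t f := by
      have hcs : (∑ i, a i) ^ 2 ≤ (v : ℝ) * ∑ i, a i ^ 2 := by
        have := sq_sum_le_card_mul_sum_sq (s := (Finset.univ : Finset (Fin v))) (f := a)
        simpa using this
      have hsum_sq : ∑ i, a i ^ 2
          = ∑ i, Real.exp (-2 * t * e i) * ‖(inner ℂ (s i) f : ℂ)‖ ^ 2 := by
        apply Finset.sum_congr rfl
        intro i _
        rw [ha, mul_pow, hsq]
      have h3 : ∑ i, a i ≤ Real.sqrt ((v : ℝ) * ∑ i, a i ^ 2) := by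
        rw [← Real.sqrt_sq (Finset.sum_nonneg fun i _ => hann i)]
        exact Real.sqrt_le_sqrt hcs
      calc ∑ i, a i ≤ Real.sqrt ((v : ℝ) * ∑ i, a i ^ 2) := h3
        _ = Real.sqrt (v : ℝ) * Real.sqrt (∑ i, a i ^ 2) :=
            Real.sqrt_mul (by positivity) _
        _ ≤ (v : ℝ) * rayHerm s e t f := by
            rw [rayHerm, ← hsum_sq]
            apply mul_le_mul_of_nonneg_right _ (Real.sqrt_nonneg _)
            have h1v : (1:ℝ) ≤ (v:ℝ) := by exact_mod_cast hv
            calc Real.sqrt (v:ℝ) ≤ Real.sqrt ((v:ℝ)^2) :=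
                  Real.sqrt_le_sqrt (by nlinarith)
              _ = (v:ℝ) := Real.sqrt_sq (by positivity)
    have hexplog : Real.exp (d0 + Real.log v) = Real.exp d0 * (v : ℝ) := by
      rw [Real.exp_add, Real.exp_log (by positivity : (0:ℝ) < (v:ℝ))]
    calc (∑ i, Real.exp (-t * e i) * N₀ ((inner ℂ (s i) f : ℂ) • s i))
        ≤ Real.exp d0 * ∑ i, a i := step1
      _ ≤ Real.exp d0 * ((v : ℝ) * rayHerm s e t f) :=
          mul_le_mul_of_nonneg_left step2 (le_of_lt (Real.exp_pos _))
      _ = Real.exp (d0 + Real.log v) * rayHerm s e t f := by rw [hexplog]; ring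
end
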